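/- Let K be a field, F ∈ K((X⁻¹)), and let x, y, x′, y′ ∈ K[X] with y ≠ 0 and y′ ≠ 0. If deg(yF − x) < −deg y′ and deg(y′F − x′) < −deg y, then xy′ = x′y; that is, x/y and x′/y′ are the same rational function. (In particular two convergents of F with this mutual approximation property coincide, so no convergent can lie strictly between two consecutive ones.) -/

import Mathlib

open Polynomial HahnSeries
open scoped Classical

/-- The degree of a formal Laurent series in `X⁻¹`: writing `F = ∑ f_i X^{-i}`
(a `LaurentSeries` in the variable `t = X⁻¹`), `deg F = -min {i : f_i ≠ 0}`,
with `deg 0 = ⊥`. -/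
noncomputable def lsDeg {K : Type*} [Field K] (F : LaurentSeries K) : WithBot ℤ :=
  if F = 0 then ⊥ else ((-F.order : ℤ) : WithBot ℤ)

/-- A polynomial in `X` viewed as an element of `K((X⁻¹))`, i.e. evaluated at the
inverse `X = t⁻¹` of the `LaurentSeries` variable `t`. -/
noncomputable def polyToLS {K : Type*} [Field K] (p : K[X]) : LaurentSeries K :=
  Polynomial.aeval (HahnSeries.single (-1 : ℤ) (1 : K)) p

lemma polyToLS_monomial {K : Type*} [Field K] (n : ℕ) (a : K) :
    polyToLS (monomial n a) = HahnSeries.single (-(n : ℤ)) a := by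
  rw [polyToLS, aeval_monomial, HahnSeries.single_pow]
  have h1 : (algebraMap K (LaurentSeries K)) a = HahnSeries.single (0 : ℤ) a := by
    rw [HahnSeries.algebraMap_apply',
      show (algebraMap K (PowerSeries K)) a = PowerSeries.C a from rfl,
      HahnSeries.ofPowerSeries_C, HahnSeries.C_apply]
  rw [h1, HahnSeries.single_mul_single]
  simp

lemma polyToLS_coeff {K : Type*} [Field K] (p : K[X]) (n : ℕ) :
    (polyToLS p).coeff (-(n : ℤ)) = p.coeff n := by
  induction p using Polynomial.induction_on' with
  | add f g hf hg =>
      have hfg : polyToLS (f + g) = polyToLS f + polyToLS g := by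
        simp [polyToLS, map_add]
      rw [hfg, HahnSeries.coeff_add, hf, hg, Polynomial.coeff_add]
  | monomial m a =>
      rw [polyToLS_monomial, coeff_monomial, HahnSeries.coeff_single]
      by_cases h : n = m
      · simp [h]
      · have : (-(n : ℤ)) ≠ (-(m : ℤ)) := by
          simp only [ne_eq, neg_inj, Nat.cast_inj]; exact h
        simp [Ne.symm h, this]

lemma polyToLS_coeff_eq_zero {K : Type*} [Field K] (p : K[X]) (g : ℤ)
    (hg : ∀ n : ℕ, g ≠ -(n : ℤ)) : (polyToLS p).coeff g = 0 := by
  induction p using Polynomial.induction_on' with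
  | add f g' hf hg' =>
      have hfg : polyToLS (f + g') = polyToLS f + polyToLS g' := by
        simp [polyToLS, map_add]
      rw [hfg, HahnSeries.coeff_add, hf, hg', add_zero]
  | monomial m a =>
      rw [polyToLS_monomial, HahnSeries.coeff_single_of_ne (hg m)]

lemma polyToLS_ne_zero {K : Type*} [Field K] {p : K[X]} (hp : p ≠ 0) :
    polyToLS p ≠ 0 := by
  intro h
  have := polyToLS_coeff p p.natDegree
  rw [h] at this
  simp only [HahnSeries.coeff_zero] at this
  exact hp (leadingCoeff_eq_zero.mp this.symm)

lemma polyToLS_order {K : Type*} [Field K] {p : K[X]} (hp : p ≠ 0) :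
    (polyToLS p).order = -(p.natDegree : ℤ) := by
  apply le_antisymm
  · apply HahnSeries.order_le_of_coeff_ne_zero
    rw [polyToLS_coeff]
    exact fun h => hp (leadingCoeff_eq_zero.mp h)
  · by_contra hlt
    push_neg at hlt
    have hne := HahnSeries.coeff_order_eq_zero.not.2 (polyToLS_ne_zero hp)
    set o := (polyToLS p).order with ho
    by_cases hex : ∃ n : ℕ, o = -(n : ℤ)
    · obtain ⟨n, hn⟩ := hex
      rw [hn, polyToLS_coeff] at hne
      have hgt : p.natDegree < n := by omega
      exact hne (Polynomial.coeff_eq_zero_of_natDegree_lt hgt)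
    · push_neg at hex
      exact hne (polyToLS_coeff_eq_zero p o hex)

lemma lsDeg_polyToLS {K : Type*} [Field K] {p : K[X]} (hp : p ≠ 0) :
    lsDeg (polyToLS p) = ((p.natDegree : ℤ) : WithBot ℤ) := by
  rw [lsDeg, if_neg (polyToLS_ne_zero hp), polyToLS_order hp, neg_neg]

lemma lsDeg_mul {K : Type*} [Field K] (A B : LaurentSeries K) :
    lsDeg (A * B) = lsDeg A + lsDeg B := by
  by_cases hA : A = 0
  · simp [hA, lsDeg]
  by_cases hB : B = 0
  · simp [hB, lsDeg]
  rw [lsDeg, lsDeg, lsDeg, if_neg hA, if_neg hB, if_neg (mul_ne_zero hA hB),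
    HahnSeries.order_mul hA hB, neg_add, WithBot.coe_add]

lemma lsDeg_add_lt {K : Type*} [Field K] {A B : LaurentSeries K} {c : ℤ}
    (hA : lsDeg A < (c : WithBot ℤ)) (hB : lsDeg B < (c : WithBot ℤ)) :
    lsDeg (A + B) < (c : WithBot ℤ) := by
  by_cases hA0 : A = 0
  · simpa [hA0] using hB
  by_cases hB0 : B = 0
  · simpa [hB0] using hA
  by_cases hAB : A + B = 0
  · simp [hAB, lsDeg]
  have hmin := HahnSeries.min_order_le_order_add hAB
  rw [lsDeg, if_neg hA0] at hA
  rw [lsDeg, if_neg hB0] at hB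
  rw [lsDeg, if_neg hAB]
  have hA' : -A.order < c := by exact_mod_cast hA
  have hB' : -B.order < c := by exact_mod_cast hB
  have : -(A + B).order < c := by
    rcases min_le_iff.mp hmin with h | h <;> omega
  exact_mod_cast this

theorem mutual_approximants_coincide
    {K : Type*} [Field K] (F : LaurentSeries K)
    (x y x' y' : K[X]) (hy : y ≠ 0) (hy' : y' ≠ 0)
    (h : lsDeg (polyToLS y * F - polyToLS x) < ((-(y'.natDegree : ℤ) : ℤ) : WithBot ℤ))
    (h' : lsDeg (polyToLS y' * F - polyToLS x') < ((-(y.natDegree : ℤ) : ℤ) : WithBot ℤ)) :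
    x * y' = x' * y := by
  by_contra hne
  have hne' : x' * y - x * y' ≠ 0 := by
    intro h0
    exact hne (by linear_combination -h0)
  set A := polyToLS y * F - polyToLS x with hA
  set B := polyToLS y' * F - polyToLS x' with hB
  have key : polyToLS (x' * y - x * y') = polyToLS y' * A - polyToLS y * B := by
    rw [hA, hB]
    simp only [polyToLS, map_sub, map_mul]
    ring
  -- bound lsDeg of each product by 0
  have h1 : lsDeg (polyToLS y' * A) < ((0 : ℤ) : WithBot ℤ) := by
    rw [lsDeg_mul, lsDeg_polyToLS hy']
    calc ((y'.natDegree : ℤ) : WithBot ℤ) + lsDeg A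
        < ((y'.natDegree : ℤ) : WithBot ℤ) + ((-(y'.natDegree : ℤ) : ℤ) : WithBot ℤ) := by
          apply WithBot.add_lt_add_left (by simp) h
      _ = ((0 : ℤ) : WithBot ℤ) := by
          rw [← WithBot.coe_add]; norm_num
  have h2 : lsDeg (-(polyToLS y * B)) < ((0 : ℤ) : WithBot ℤ) := by
    have : lsDeg (-(polyToLS y * B)) = lsDeg (polyToLS y * B) := by
      unfold lsDeg
      simp [neg_eq_zero, HahnSeries.order_neg]
    rw [this, lsDeg_mul, lsDeg_polyToLS hy]
    calc ((y.natDegree : ℤ) : WithBot ℤ) + lsDeg B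
        < ((y.natDegree : ℤ) : WithBot ℤ) + ((-(y.natDegree : ℤ) : ℤ) : WithBot ℤ) := by
          apply WithBot.add_lt_add_left (by simp) h'
      _ = ((0 : ℤ) : WithBot ℤ) := by
          rw [← WithBot.coe_add]; norm_num
  have hlt : lsDeg (polyToLS (x' * y - x * y')) < ((0 : ℤ) : WithBot ℤ) := by
    rw [key, sub_eq_add_neg]
    exact lsDeg_add_lt h1 h2
  rw [lsDeg_polyToLS hne'] at hlt
  have : ((x' * y - x * y').natDegree : ℤ) < 0 := by exact_mod_cast hlt
  omega
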